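/- Let n ≥ α. The map sending a permutation Q ∈ S_{α+n} to the upper-left α×α corner [Q]_α of its permutation matrix induces a bijection between the double coset space S_n \ S_{α+n} / S_n and Π_α. -/

import Mathlib

open Equiv

/-- The subgroup `S_n ⊆ S_{α+n}` of permutations fixing `{1,…,α}` pointwise. -/
def fixFirst (α n : ℕ) : Subgroup (Perm (Fin (α + n))) :=
  fixingSubgroup (Perm (Fin (α + n))) {i : Fin (α + n) | (i : ℕ) < α}

/-- The upper-left `α×α` corner of (the permutation matrix of) `Q ∈ S_{α+n}`,
viewed as a partial map `Fin α → Option (Fin α)`. -/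
def corner (α n : ℕ) (Q : Perm (Fin (α + n))) (i : Fin α) : Option (Fin α) :=
  if h : ((Q (Fin.castAdd n i)) : ℕ) < α then some ⟨(Q (Fin.castAdd n i) : ℕ), h⟩ else none

section Aux

variable {α n : ℕ}

lemma mem_fixFirst_iff {g : Perm (Fin (α + n))} :
    g ∈ fixFirst α n ↔ ∀ x : Fin (α + n), (x : ℕ) < α → g x = x := by
  simp [fixFirst, mem_fixingSubgroup_iff, Perm.smul_def]

lemma fixFirst_big {g : Perm (Fin (α + n))} (hg : g ∈ fixFirst α n)
    {x : Fin (α + n)} (hx : ¬ ((x : ℕ) < α)) : ¬ ((g x : ℕ) < α) := by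
  rw [mem_fixFirst_iff] at hg
  intro hlt
  have := hg _ hlt
  exact hx (by rwa [g.injective this] at hlt)

lemma corner_eq_some_iff {Q : Perm (Fin (α + n))} {i a : Fin α} :
    corner α n Q i = some a ↔ Q (Fin.castAdd n i) = Fin.castAdd n a := by
  unfold corner
  split_ifs with h
  · constructor
    · rintro ⟨⟩; exact Fin.ext rfl
    · intro he
      have : ((Q (Fin.castAdd n i) : Fin (α+n)) : ℕ) = (a : ℕ) := by rw [he]; rfl
      exact congrArg some (Fin.ext this)
  · simp only [false_iff, reduceCtorEq]
    intro he; rw [he] at h; exact h a.2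

lemma corner_eq_none_iff {Q : Perm (Fin (α + n))} {i : Fin α} :
    corner α n Q i = none ↔ ¬ ((Q (Fin.castAdd n i) : ℕ) < α) := by
  unfold corner; split_ifs with h <;> simp [h]

lemma corner_inj {Q : Perm (Fin (α + n))} :
    ∀ i j a, corner α n Q i = some a → corner α n Q j = some a → i = j := by
  intro i j a hi hj
  rw [corner_eq_some_iff] at hi hj
  have := Q.injective (hi.trans hj.symm)
  exact Fin.castAdd_injective _ _ this

lemma corner_doset {Q h k : Perm (Fin (α + n))} (hh : h ∈ fixFirst α n)
    (hk : k ∈ fixFirst α n) : corner α n (h * Q * k) = corner α n Q := by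
  funext i
  have hi : ((Fin.castAdd n i : Fin (α + n)) : ℕ) < α := i.2
  have hk' : k (Fin.castAdd n i) = Fin.castAdd n i := (mem_fixFirst_iff.mp hk) _ hi
  unfold corner
  simp only [Perm.mul_apply, hk']
  by_cases hq : ((Q (Fin.castAdd n i) : ℕ) < α)
  · have hfix : h (Q (Fin.castAdd n i)) = Q (Fin.castAdd n i) := (mem_fixFirst_iff.mp hh) _ hq
    simp only [hfix]
  · have : ¬ ((h (Q (Fin.castAdd n i)) : ℕ) < α) := fixFirst_big hh hq
    rw [dif_neg hq, dif_neg this]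

end Aux

section B
variable {α n : ℕ}

/-- partial inverse of a partial injection -/
noncomputable def finv (f : Fin α → Option (Fin α)) (j : Fin α) : Option (Fin α) :=
  if h : ∃ i, f i = some j then some h.choose else none

lemma finv_eq_some_of {f : Fin α → Option (Fin α)} {i j : Fin α} (h : finv f j = some i) :
    f i = some j := by
  unfold finv at h
  by_cases h' : ∃ i, f i = some j
  · rw [dif_pos h'] at h
    have hs := h'.choose_spec
    rwa [Option.some_injective _ h] at hs
  · rw [dif_neg h'] at h; exact absurd h (by simp)

lemma finv_eq_some {f : Fin α → Option (Fin α)}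
    (hf : ∀ i j a, f i = some a → f j = some a → i = j) {i j : Fin α} :
    finv f j = some i ↔ f i = some j := by
  refine ⟨finv_eq_some_of, fun h => ?_⟩
  have hex : ∃ i, f i = some j := ⟨i, h⟩
  unfold finv
  rw [dif_pos hex]
  exact congrArg some (hf _ _ _ hex.choose_spec h).symm ▸ rfl

lemma finv_eq_none {f : Fin α → Option (Fin α)} {j : Fin α} :
    finv f j = none ↔ ∀ i, f i ≠ some j := by
  unfold finv; split_ifs with h' <;> simp_all

lemma finv_inj (f : Fin α → Option (Fin α)) :
    ∀ i j a, finv f i = some a → finv f j = some a → i = j := by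
  intro i j a hi hj
  have hi' := finv_eq_some_of hi
  have hj' := finv_eq_some_of hj
  rw [hi'] at hj'; exact Option.some_injective _ hj'

lemma finv_finv {f : Fin α → Option (Fin α)}
    (hf : ∀ i j a, f i = some a → f j = some a → i = j) : finv (finv f) = f := by
  funext j
  cases hfj : f j with
  | none =>
    rw [finv_eq_none]
    intro i hi
    have := finv_eq_some_of hi
    rw [hfj] at this; exact absurd this (by simp)
  | some a =>
    rw [finv_eq_some (finv_inj f)]
    exact (finv_eq_some hf).mpr hfj

/-- canonical permutation with a given corner -/
noncomputable def qfFun (hn : α ≤ n) (f : Fin α → Option (Fin α)) (x : Fin (α + n)) : Fin (α + n) :=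
  if h : (x : ℕ) < α then
    match f ⟨x, h⟩ with
    | some a => Fin.castAdd n a
    | none => ⟨α + (x : ℕ), by omega⟩
  else if h2 : (x : ℕ) - α < α then
    match finv f ⟨(x : ℕ) - α, h2⟩ with
    | some i => ⟨α + (i : ℕ), by omega⟩
    | none => Fin.castAdd n ⟨(x : ℕ) - α, h2⟩
  else x

lemma qf_qf (hn : α ≤ n) {f : Fin α → Option (Fin α)}
    (hf : ∀ i j a, f i = some a → f j = some a → i = j) (x : Fin (α + n)) :
    qfFun hn (finv f) (qfFun hn f x) = x := by
  unfold qfFun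
  by_cases h : (x : ℕ) < α
  · rw [dif_pos h]
    cases hfx : f ⟨x, h⟩ with
    | some a =>
      have ha : ((Fin.castAdd n a : Fin (α + n)) : ℕ) < α := a.2
      rw [dif_pos ha]
      have : finv f ⟨((Fin.castAdd n a : Fin (α + n)) : ℕ), ha⟩ = some ⟨x, h⟩ := by
        rw [finv_eq_some hf]
        convert hfx using 2
        exact Fin.ext rfl
      rw [this]
      exact Fin.ext rfl
    | none =>
      have h1 : ¬ ((α + (x : ℕ)) < α) := by omega
      have h2 : (α + (x : ℕ)) - α < α := by omega
      simp only [h1, dif_neg, not_false_iff, h2, dif_pos]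
      have : finv (finv f) ⟨(α + (x : ℕ)) - α, h2⟩ = none := by
        rw [finv_finv hf]
        have e : (⟨(α + (x : ℕ)) - α, h2⟩ : Fin α) = ⟨x, h⟩ := Fin.mk_eq_mk.mpr (by omega)
        rw [e]; exact hfx
      rw [this]
      exact Fin.ext (by simp only [Fin.coe_castAdd]; omega)
  · rw [dif_neg h]
    by_cases h2 : (x : ℕ) - α < α
    · rw [dif_pos h2]
      cases hj : finv f ⟨(x : ℕ) - α, h2⟩ with
      | some i =>
        have hi1 : ¬ ((α + (i : ℕ)) < α) := by omega
        have hi2 : (α + (i : ℕ)) - α < α := by omega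
        simp only [hi1, dif_neg, not_false_iff, hi2, dif_pos]
        have : finv (finv f) ⟨(α + (i : ℕ)) - α, hi2⟩ = some ⟨(x : ℕ) - α, h2⟩ := by
          rw [finv_finv hf]
          have hfi := finv_eq_some_of hj
          have e : (⟨(α + (i : ℕ)) - α, hi2⟩ : Fin α) = i := Fin.ext (by simp)
          rw [e]; exact hfi
        rw [this]
        exact Fin.ext (by simp only [Fin.coe_castAdd]; omega)
      | none =>
        have hb : (((Fin.castAdd n ⟨(x : ℕ) - α, h2⟩ : Fin (α + n))) : ℕ) < α := h2
        rw [dif_pos hb]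
        have : finv f ⟨((Fin.castAdd n ⟨(x : ℕ) - α, h2⟩ : Fin (α + n)) : ℕ), hb⟩ = none := by
          convert hj using 2
          exact Fin.ext rfl
        rw [this]
        exact Fin.ext (by simp only [Fin.coe_castAdd]; omega)
    · rw [dif_neg h2, dif_neg h, dif_neg h2]

noncomputable def qfPerm (hn : α ≤ n) (f : Fin α → Option (Fin α))
    (hf : ∀ i j a, f i = some a → f j = some a → i = j) : Perm (Fin (α + n)) where
  toFun := qfFun hn f
  invFun := qfFun hn (finv f)
  left_inv := qf_qf hn hf
  right_inv := fun x => by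
    have := qf_qf hn (finv_inj f) x
    rwa [finv_finv hf] at this

end B

section C
variable {α n : ℕ}

lemma corner_qf (hn : α ≤ n) (f : Fin α → Option (Fin α))
    (hf : ∀ i j a, f i = some a → f j = some a → i = j) :
    corner α n (qfPerm hn f hf) = f := by
  funext i
  have happ : ∀ x, (qfPerm hn f hf) x = qfFun hn f x := fun _ => rfl
  have hi : ((Fin.castAdd n i : Fin (α + n)) : ℕ) < α := i.2
  have hmk : (⟨((Fin.castAdd n i : Fin (α + n)) : ℕ), hi⟩ : Fin α) = i := Fin.ext rfl
  cases hfi : f i with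
  | some a =>
    rw [corner_eq_some_iff, happ]
    unfold qfFun
    rw [dif_pos hi, hmk, hfi]
  | none =>
    rw [corner_eq_none_iff, happ]
    unfold qfFun
    rw [dif_pos hi, hmk, hfi]
    simp only [Fin.val_mk]
    omega

open Classical in
/-- If two permutations have the same corner, they are doset-equivalent. -/
lemma doset_of_corner_eq {Q Q' : Perm (Fin (α + n))}
    (hc : corner α n Q = corner α n Q') :
    ∃ a ∈ fixFirst α n, ∃ b ∈ fixFirst α n, Q' = a * Q * b := by
  classical
  -- the subtype of "big" elements
  set p : Fin (α + n) → Prop := fun x => (x : ℕ) < α with hp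
  set S := {x : Fin (α + n) // ¬ p x} with hS
  set pB : S → Prop := fun x => ((Q x.1 : ℕ) < α) with hpB
  set pB' : S → Prop := fun x => ((Q' x.1 : ℕ) < α) with hpB'
  -- key fact: if x is big and Q x = j < α then Q'⁻¹ j is big
  have key : ∀ (R R' : Perm (Fin (α + n))), corner α n R = corner α n R' →
      ∀ x : Fin (α + n), ¬ ((x : ℕ) < α) → ((R x : ℕ) < α) →
      ¬ (((R'.symm (R x)) : ℕ) < α) := by
    intro R R' hRR x hx hRx hlt
    set y := R'.symm (R x) with hy
    have h1 : corner α n R' ⟨(y : ℕ), hlt⟩ = some ⟨(R x : ℕ), hRx⟩ := by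
      rw [corner_eq_some_iff]
      have : Fin.castAdd n (⟨(y : ℕ), hlt⟩ : Fin α) = y := Fin.ext rfl
      rw [this, hy]
      exact Fin.ext (by simp)
    rw [← hRR] at h1
    rw [corner_eq_some_iff] at h1
    have h2 : Fin.castAdd n (⟨(y : ℕ), hlt⟩ : Fin α) = x := by
      apply R.injective
      rw [h1]
      exact Fin.ext (by simp)
    apply hx
    rw [← h2]
    exact hlt
  -- the equiv between the "lands small" parts
  have toMem : ∀ x : {x : S // pB x}, ¬ p (Q'.symm (Q x.1.1)) ∧ pB' ⟨Q'.symm (Q x.1.1), (key Q Q' hc x.1.1 x.1.2 x.2)⟩ := by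
    intro x
    refine ⟨key Q Q' hc x.1.1 x.1.2 x.2, ?_⟩
    show ((Q' (Q'.symm (Q x.1.1)) : ℕ) < α)
    rw [Equiv.apply_symm_apply]
    exact x.2
  have toMem' : ∀ x : {x : S // pB' x}, ¬ p (Q.symm (Q' x.1.1)) ∧ pB ⟨Q.symm (Q' x.1.1), (key Q' Q hc.symm x.1.1 x.1.2 x.2)⟩ := by
    intro x
    refine ⟨key Q' Q hc.symm x.1.1 x.1.2 x.2, ?_⟩
    show ((Q (Q.symm (Q' x.1.1)) : ℕ) < α)
    rw [Equiv.apply_symm_apply]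
    exact x.2
  set φ : {x : S // pB x} ≃ {x : S // pB' x} :=
    { toFun := fun x => ⟨⟨Q'.symm (Q x.1.1), (toMem x).1⟩, (toMem x).2⟩
      invFun := fun x => ⟨⟨Q.symm (Q' x.1.1), (toMem' x).1⟩, (toMem' x).2⟩
      left_inv := fun x => by
        ext
        show (Q.symm (Q' (Q'.symm (Q x.1.1))) : ℕ) = _
        rw [Equiv.apply_symm_apply, Equiv.symm_apply_apply]
      right_inv := fun x => by
        ext
        show (Q'.symm (Q (Q.symm (Q' x.1.1))) : ℕ) = _
        rw [Equiv.apply_symm_apply, Equiv.symm_apply_apply] } with hφ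
  have hcard : Fintype.card {x : S // ¬ pB x} = Fintype.card {x : S // ¬ pB' x} := by
    rw [Fintype.card_subtype_compl pB, Fintype.card_subtype_compl pB', Fintype.card_congr φ]
  set ψ : {x : S // ¬ pB x} ≃ {x : S // ¬ pB' x} := Fintype.equivOfCardEq hcard with hψ
  set en : Perm S := (Equiv.sumCompl pB).symm.trans ((Equiv.sumCongr φ ψ).trans (Equiv.sumCompl pB')) with hen
  set g : Perm (Fin (α + n)) := Equiv.Perm.subtypeCongr (Equiv.refl {x : Fin (α + n) // p x}) en with hg
  have hg_small : ∀ x : Fin (α + n), (x : ℕ) < α → g x = x := by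
    intro x hx
    rw [hg, Equiv.Perm.subtypeCongr.left_apply _ _ (show p x from hx)]
    rfl
  have hg_mem : g ∈ fixFirst α n := mem_fixFirst_iff.mpr hg_small
  have hg_B : ∀ (x : S) (hx : pB x), g x.1 = Q'.symm (Q x.1) := by
    intro x hx
    rw [hg, Equiv.Perm.subtypeCongr.right_apply _ _ x.2]
    have hx' : (⟨x.1, x.2⟩ : S) = x := rfl
    rw [hx', hen]
    simp only [Equiv.trans_apply]
    rw [Equiv.sumCompl_symm_apply_of_pos (p := pB) (a := x) hx]
    simp [hφ]
  refine ⟨Q' * g * Q⁻¹, ?_, g⁻¹, (fixFirst α n).inv_mem hg_mem, by group⟩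
  rw [mem_fixFirst_iff]
  intro j hj
  simp only [Perm.mul_apply]
  set x := Q⁻¹ j with hx
  have hQx : Q x = j := by rw [hx]; simp
  by_cases hxs : (x : ℕ) < α
  · rw [hg_small x hxs]
    -- corner equality gives Q' x = Q x = j
    have h1 : corner α n Q ⟨(x : ℕ), hxs⟩ = some ⟨(j : ℕ), hj⟩ := by
      rw [corner_eq_some_iff]
      have : Fin.castAdd n (⟨(x : ℕ), hxs⟩ : Fin α) = x := Fin.ext rfl
      rw [this, hQx]
      exact Fin.ext rfl
    rw [hc] at h1
    rw [corner_eq_some_iff] at h1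
    have : Fin.castAdd n (⟨(x : ℕ), hxs⟩ : Fin α) = x := Fin.ext rfl
    rw [this] at h1
    rw [h1]
    exact Fin.ext rfl
  · have hxB : pB ⟨x, hxs⟩ := by show ((Q x : ℕ) < α); rw [hQx]; exact hj
    have := hg_B ⟨x, hxs⟩ hxB
    simp only at this
    rw [this, hQx]
    simp

end C

/-- For `n ≥ α`, the map `Q ↦ [Q]_α` induces a bijection between the double
coset space `S_n \ S_{α+n} / S_n` and `Π_α`, the set of partial injections of
`{1,…,α}`. -/
theorem doset_corner_bijective (α n : ℕ) (h : α ≤ n) :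
    ∃ F : DoubleCoset.Quotient (fixFirst α n : Set (Perm (Fin (α + n))))
            (fixFirst α n : Set (Perm (Fin (α + n)))) →
          {f : Fin α → Option (Fin α) // ∀ i j a, f i = some a → f j = some a → i = j},
      (∀ Q : Perm (Fin (α + n)), (F (Quotient.mk'' Q)).1 = corner α n Q) ∧
      Function.Bijective F := by
  classical
  have wd : ∀ (Q Q' : Perm (Fin (α + n))),
      (DoubleCoset.setoid (fixFirst α n : Set (Perm (Fin (α + n))))
        (fixFirst α n : Set (Perm (Fin (α + n))))) Q Q' →
      (⟨corner α n Q, corner_inj⟩ :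
        {f : Fin α → Option (Fin α) // ∀ i j a, f i = some a → f j = some a → i = j}) =
      ⟨corner α n Q', corner_inj⟩ := by
    intro Q Q' hQQ
    rw [DoubleCoset.rel_iff] at hQQ
    obtain ⟨a, ha, b, hb, rfl⟩ := hQQ
    exact Subtype.ext (corner_doset ha hb).symm
  refine ⟨Quotient.lift (fun Q => ⟨corner α n Q, corner_inj⟩) wd, fun Q => rfl, ?_, ?_⟩
  · intro x y
    refine Quotient.inductionOn₂' x y ?_
    intro Q Q' heq
    have hcc : corner α n Q = corner α n Q' := Subtype.ext_iff.mp heq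
    exact Quotient.sound' (DoubleCoset.rel_iff.mpr (doset_of_corner_eq hcc))
  · rintro ⟨f, hf⟩
    exact ⟨Quotient.mk'' (qfPerm h f hf), Subtype.ext (corner_qf h f hf)⟩
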